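/- Let n ≥ 1 and let E be a nonabelian subgroup of GL_3(ℤ/2^nℤ) of order 21. Then the quotient N_{GL_3(ℤ/2^nℤ)}(E)/E of the normalizer of E by E is a 2-group (its order is a power of 2). -/

import Mathlib

lemma sq_lem {R : Type*} [Ring R] (j : ℕ) (a : R) :
    (1 + (2^(j+1) : ℕ) • a)^2 = 1 + (2^(j+2) : ℕ) • (a + (2^j : ℕ) • (a*a)) := by
  have e1 : 2 * 2^(j+1) = 2^(j+2) := by ring
  have e2 : 2^(j+1) * 2^(j+1) = 2^(j+2) * 2^j := by ring
  rw [sq, mul_add, add_mul, add_mul, one_mul, mul_one, smul_mul_smul_comm, smul_add,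
    smul_smul, one_mul, ← add_assoc, add_assoc (1:R), ← two_smul ℕ, smul_smul, e1, e2,
    add_assoc]

lemma pow_lem {R : Type*} [Ring R] (a : R) (k : ℕ) :
    ∃ b : R, (1 + (2:ℕ) • a)^(2^k) = 1 + (2^(k+1) : ℕ) • b := by
  induction k with
  | zero => exact ⟨a, by norm_num⟩
  | succ k ih =>
      obtain ⟨b, hb⟩ := ih
      exact ⟨b + (2^k : ℕ) • (b*b), by rw [pow_succ, pow_mul, hb, sq_lem]⟩

lemma zmod_two_dvd (n : ℕ) (hn : 1 ≤ n) (y : ZMod (2^n))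
    (h : ZMod.castHom (dvd_pow_self 2 (by omega : n ≠ 0)) (ZMod 2) y = 0) :
    ∃ z : ZMod (2^n), y = (2:ℕ) • z := by
  haveI : NeZero (2^n) := ⟨pow_ne_zero n two_ne_zero⟩
  have h2 : ((y.val : ℕ) : ZMod 2) = 0 := by
    rw [← map_natCast (ZMod.castHom (dvd_pow_self 2 (by omega : n ≠ 0)) (ZMod 2)) y.val,
      ZMod.natCast_rightInverse y, h]
  rw [ZMod.natCast_eq_zero_iff] at h2
  obtain ⟨w, hw⟩ := h2
  refine ⟨(w : ZMod (2^n)), ?_⟩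
  rw [← ZMod.natCast_rightInverse y, hw]
  push_cast
  rw [nsmul_eq_mul]
  push_cast
  ring

lemma ker_pow (n : ℕ) (hn : 1 ≤ n) (g : GL (Fin 3) (ZMod (2^n)))
    (h : Matrix.GeneralLinearGroup.map
      (ZMod.castHom (dvd_pow_self 2 (by omega : n ≠ 0)) (ZMod 2)) g = 1) :
    g ^ (2^(n-1)) = 1 := by
  set f := ZMod.castHom (dvd_pow_self 2 (by omega : n ≠ 0)) (ZMod 2) with hf
  have hval : (g.val).map f = 1 := by
    have := congrArg Units.val h
    simpa [Matrix.GeneralLinearGroup.map, RingHom.mapMatrix_apply] using this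
  have entry : ∀ i j, ∃ z : ZMod (2^n),
      g.val i j = (1 : Matrix (Fin 3) (Fin 3) (ZMod (2^n))) i j + (2:ℕ) • z := by
    intro i j
    have h0 : f (g.val i j - (1 : Matrix (Fin 3) (Fin 3) (ZMod (2^n))) i j) = 0 := by
      have h1 : f (g.val i j) = (1 : Matrix (Fin 3) (Fin 3) (ZMod 2)) i j := by
        have := congrFun (congrFun hval i) j
        simpa [Matrix.map_apply] using this
      rcases eq_or_ne i j with rfl | hij
      · simp [map_sub, h1, Matrix.one_apply]
      · simp [map_sub, h1, Matrix.one_apply_ne hij]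
    obtain ⟨z, hz⟩ := zmod_two_dvd n hn _ h0
    exact ⟨z, by rw [← hz]; ring⟩
  choose A0 hA using entry
  set A : Matrix (Fin 3) (Fin 3) (ZMod (2^n)) := Matrix.of A0 with hAdef
  have hgv : g.val = 1 + (2:ℕ) • A := by
    ext i j
    simp only [Matrix.add_apply, Matrix.smul_apply]
    exact hA i j
  obtain ⟨b, hb⟩ := pow_lem A (n-1)
  have hzero : ((2^(n-1+1) : ℕ)) • b = (0 : Matrix (Fin 3) (Fin 3) (ZMod (2^n))) := by
    rw [← Nat.cast_smul_eq_nsmul (ZMod (2^n))]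
    have : n - 1 + 1 = n := by omega
    rw [this, ZMod.natCast_self, zero_smul]
  apply Units.ext
  rw [Units.val_pow_eq_pow_val, hgv, hb, hzero, add_zero, Units.val_one]

lemma card168 : Nat.card (GL (Fin 3) (ZMod 2)) = 168 := by
  rw [Matrix.card_GL_field]
  simp [Fin.prod_univ_three, ZMod.card]

lemma arith (q s b : ℕ) (hq : q ≠ 0) (h1 : q * 21 = s * 2^b) (hs : s ∣ 168) :
    ∃ a, q = 2^a := by
  refine ⟨q.primeFactorsList.length, Nat.eq_prime_pow_of_unique_prime_dvd hq ?_⟩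
  intro d hd hdq
  by_contra hd2
  have hodd : d.Coprime 2 := (Nat.coprime_primes hd Nat.prime_two).mpr hd2
  have hdk : d.Coprime (2^b) := hodd.pow_right b
  have hds : d ∣ s := hdk.dvd_of_dvd_mul_right (h1 ▸ Dvd.dvd.mul_right hdq 21)
  have hd168 : d ∣ 168 := hds.trans hs
  have hd37 : d = 3 ∨ d = 7 := by
    have hmem : d ∈ Nat.divisors 168 := Nat.mem_divisors.mpr ⟨hd168, by norm_num⟩
    fin_cases hmem <;> revert hd hd2 <;> norm_num
  have hd21 : d ∣ 21 := by rcases hd37 with rfl | rfl <;> norm_num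
  have hsq : d * d ∣ s * 2^b := h1 ▸ Nat.mul_dvd_mul hdq hd21
  have hsqs : d * d ∣ s := (hdk.mul hdk).dvd_of_dvd_mul_right hsq
  have hfin : d * d ∣ 168 := hsqs.trans hs
  rcases hd37 with rfl | rfl <;> norm_num at hfin

/-- Let `n ≥ 1` and `E` a nonabelian subgroup of `GL_3(ℤ/2^nℤ)` of order
`21`. Then `N_{GL_3(ℤ/2^nℤ)}(E)/E` is a `2`-group. -/
theorem stmt15 (n : ℕ) (hn : 1 ≤ n) (E : Subgroup (GL (Fin 3) (ZMod (2 ^ n))))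
    (hE : Nat.card E = 21) (hNA : ¬ (∀ x y : E, x * y = y * x)) :
    ∃ a : ℕ, Nat.card ((Subgroup.normalizer (E : Set (GL (Fin 3) (ZMod (2 ^ n))))) ⧸ E.subgroupOf (Subgroup.normalizer (E : Set (GL (Fin 3) (ZMod (2 ^ n)))))) = 2 ^ a := by
  haveI : NeZero (2^n) := ⟨pow_ne_zero n two_ne_zero⟩
  haveI : Fact (Nat.Prime 2) := ⟨Nat.prime_two⟩
  set N := Subgroup.normalizer (E : Set (GL (Fin 3) (ZMod (2 ^ n)))) with hNdef
  let φ : GL (Fin 3) (ZMod (2^n)) →* GL (Fin 3) (ZMod 2) :=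
    Matrix.GeneralLinearGroup.map (ZMod.castHom (dvd_pow_self 2 (by omega : n ≠ 0)) (ZMod 2))
  let ψ : N →* GL (Fin 3) (ZMod 2) := φ.comp N.subtype
  have hkerP : IsPGroup 2 ψ.ker := by
    intro g
    refine ⟨n - 1, ?_⟩
    have hg1 : φ ((g : N) : GL (Fin 3) (ZMod (2^n))) = 1 := g.2
    have := ker_pow n hn _ hg1
    ext
    push_cast [this]
    rfl
  obtain ⟨b, hbk⟩ := hkerP.exists_card_eq
  have hsub : Nat.card (E.subgroupOf N) = 21 := by
    rw [← hE]
    exact Nat.card_congr (Subgroup.subgroupOfEquivOfLe Subgroup.le_normalizer).toEquiv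
  have hcard1 : Nat.card N = Nat.card (N ⧸ E.subgroupOf N) * Nat.card (E.subgroupOf N) :=
    Subgroup.card_eq_card_quotient_mul_card_subgroup _
  have hcard2 : Nat.card N = Nat.card (N ⧸ ψ.ker) * Nat.card ψ.ker :=
    Subgroup.card_eq_card_quotient_mul_card_subgroup _
  have hquot : Nat.card (N ⧸ ψ.ker) = Nat.card ψ.range :=
    Nat.card_congr (QuotientGroup.quotientKerEquivRange ψ).toEquiv
  have hdvd : Nat.card ψ.range ∣ 168 := card168 ▸ Subgroup.card_subgroup_dvd_card _
  have hq0 : Nat.card (N ⧸ E.subgroupOf N) ≠ 0 := Nat.card_pos.ne'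
  refine arith _ (Nat.card ψ.range) b hq0 ?_ hdvd
  rw [← hsub, ← hcard1, hcard2, hquot, hbk]
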